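/- arXiv:1101.0099 — 2 statements merged into one kernel-verified Lean document; each statement's English description precedes it below -/
import Mathlib

section
/- There is no periodic billiard trajectory length L_{k,ℓ} = 2k·sin(πℓ/k) strictly between 2π and 8; that is, for all integers k ≥ 2 and 1 ≤ ℓ ≤ k/2, either 2k·sin(πℓ/k) ≤ 2π or 2k·sin(πℓ/k) ≥ 8. -/
theorem no_length_between_two_pi_and_eight (k ℓ : ℕ) (hk : 2 ≤ k) (hℓ : 1 ≤ ℓ)
    (hℓk : 2 * ℓ ≤ k) :
    2 * (k : ℝ) * Real.sin (Real.pi * ℓ / k) ≤ 2 * Real.pi ∨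
      8 ≤ 2 * (k : ℝ) * Real.sin (Real.pi * ℓ / k) := by
  have hkpos : (0:ℝ) < k := by positivity
  have hπ := Real.pi_pos
  have hℓpos : (0:ℝ) < ℓ := by exact_mod_cast hℓ
  rcases eq_or_lt_of_le hℓ with h1 | h2
  · left
    have hx : Real.sin (Real.pi * ℓ / k) ≤ Real.pi * ℓ / k :=
      Real.sin_le (by positivity)
    have : 2 * (k:ℝ) * Real.sin (Real.pi * ℓ / k) ≤ 2 * (k:ℝ) * (Real.pi * ℓ / k) := by
      nlinarith
    have hℓ1 : (ℓ:ℝ) = 1 := by exact_mod_cast h1.symm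
    calc 2 * (k:ℝ) * Real.sin (Real.pi * ℓ / k) ≤ 2 * (k:ℝ) * (Real.pi * ℓ / k) := this
      _ = 2 * Real.pi := by field_simp [hℓ1]; linarith
  · right
    have hℓ2 : (2:ℝ) ≤ ℓ := by exact_mod_cast h2
    have hℓkR : 2 * (ℓ:ℝ) ≤ k := by exact_mod_cast hℓk
    have hxle : Real.pi * ℓ / k ≤ Real.pi / 2 := by
      rw [div_le_div_iff₀ hkpos two_pos]
      nlinarith
    have hlb := Real.mul_le_sin (x := Real.pi * ℓ / k) (by positivity) hxle
    have : 2 / Real.pi * (Real.pi * ℓ / k) = 2 * ℓ / k := by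
      field_simp
    rw [this] at hlb
    have : 2 * (k:ℝ) * (2 * ℓ / k) ≤ 2 * (k:ℝ) * Real.sin (Real.pi * ℓ / k) := by
      nlinarith
    have heq : 2 * (k:ℝ) * (2 * ℓ / k) = 4 * ℓ := by field_simp; ring
    nlinarith
end

section
/- Define A(t) = ∫₀^∞ e^{−u³/6} [γ e^{γ t u} + e^{−t u}] du with γ = e^{iπ/3}. Then A satisfies the Airy-type equation A''(t) + 2 t A(t) = 0 for all real t. -/
open MeasureTheory Complex Set Filter

noncomputable section AiryAux

def γ₀ : ℂ := Complex.exp (Real.pi * Complex.I / 3)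

lemma γre : γ₀.re = 1/2 := by
  have h : (Real.pi : ℂ) * Complex.I / 3 = (Real.pi/3 : ℝ) * Complex.I := by push_cast; ring
  rw [γ₀, h, Complex.exp_ofReal_mul_I_re, Real.cos_pi_div_three]

lemma γabs : ‖γ₀‖ = 1 := by
  rw [γ₀, Complex.norm_exp]; simp

lemma γcube : γ₀ ^ 3 = -1 := by
  rw [γ₀, ← Complex.exp_nat_mul]
  norm_num
  rw [show (3:ℂ) * (↑Real.pi * Complex.I / 3) = ↑Real.pi * Complex.I by ring,
    Complex.exp_pi_mul_I]

lemma integrable_exp_aux (S : ℝ) :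
    IntegrableOn (fun u : ℝ => Real.exp (S * u - u ^ 3 / 6)) (Set.Ioi 0) := by
  set R : ℝ := max 1 (6 * (S + 1)) with hR
  have hR1 : (1:ℝ) ≤ R := le_max_left _ _
  have hR0 : (0:ℝ) ≤ R := le_trans zero_le_one hR1
  have hcont : Continuous (fun u : ℝ => Real.exp (S * u - u ^ 3 / 6)) := by fun_prop
  have h1 : IntegrableOn (fun u : ℝ => Real.exp (S * u - u ^ 3 / 6)) (Set.Ioc 0 R) :=
    (hcont.integrableOn_Icc (a := 0) (b := R)).mono_set Set.Ioc_subset_Icc_self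
  have h2 : IntegrableOn (fun u : ℝ => Real.exp (S * u - u ^ 3 / 6)) (Set.Ioi R) := by
    apply Integrable.mono' (g := fun u : ℝ => Real.exp (-1 * u))
      (exp_neg_integrableOn_Ioi R one_pos) (hcont.aestronglyMeasurable.restrict)
    filter_upwards [ae_restrict_mem measurableSet_Ioi] with u hu
    rw [Real.norm_eq_abs, _root_.abs_of_nonneg (Real.exp_nonneg _), Real.exp_le_exp]
    have hu1 : (1:ℝ) ≤ u := le_trans hR1 (le_of_lt hu)
    have hu6 : 6 * (S + 1) ≤ u := le_trans (le_max_right _ _) (le_of_lt hu)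
    nlinarith [sq_nonneg u, mul_le_mul_of_nonneg_left hu6 (by linarith : (0:ℝ) ≤ u)]
  rw [show Set.Ioi (0:ℝ) = Set.Ioc 0 R ∪ Set.Ioi R from (Set.Ioc_union_Ioi_eq_Ioi hR0).symm]
  exact h1.union h2

lemma integrable_poly_exp (k : ℕ) (T : ℝ) :
    IntegrableOn (fun u : ℝ => u ^ k * Real.exp (T * u - u ^ 3 / 6)) (Set.Ioi 0) := by
  apply Integrable.mono' (integrable_exp_aux (T + k))
    ((by fun_prop :
      Continuous fun u : ℝ => u ^ k * Real.exp (T * u - u ^ 3 / 6)).aestronglyMeasurable.restrict)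
  filter_upwards [ae_restrict_mem measurableSet_Ioi] with u hu
  have hu0 : (0:ℝ) ≤ u := le_of_lt hu
  rw [Real.norm_eq_abs, _root_.abs_of_nonneg (by positivity)]
  have h1 : u ^ k ≤ Real.exp (k * u) := by
    calc u ^ k ≤ (Real.exp u) ^ k :=
          pow_le_pow_left₀ hu0 (le_trans (by linarith) (Real.add_one_le_exp u)) k
      _ = Real.exp (k * u) := by rw [← Real.exp_nat_mul]
  calc u ^ k * Real.exp (T * u - u ^ 3 / 6) ≤ Real.exp (k * u) * Real.exp (T * u - u ^ 3 / 6) :=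
        mul_le_mul_of_nonneg_right h1 (Real.exp_nonneg _)
    _ = Real.exp ((T + k) * u - u ^ 3 / 6) := by rw [← Real.exp_add]; ring_nf

lemma re_cube (u : ℝ) : (-(u:ℂ) ^ 3 / 6).re = -u ^ 3 / 6 := by
  have : (-(u:ℂ) ^ 3 / 6) = ((-u ^ 3 / 6 : ℝ) : ℂ) := by push_cast; ring
  rw [this, Complex.ofReal_re]

lemma re_g (t u : ℝ) : (γ₀ * (t:ℂ) * (u:ℂ)).re = t * u / 2 := by
  simp [Complex.mul_re, Complex.mul_im, γre]
  ring

lemma norm_bound (t u T : ℝ) (hu : 0 ≤ u) (ht : |t| ≤ T) (a b : ℂ) (r : ℝ)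
    (ha : ‖a‖ ≤ r) (hb : ‖b‖ ≤ r) :
    ‖Complex.exp (-(u:ℂ) ^ 3 / 6) * (a * Complex.exp (γ₀ * (t:ℂ) * (u:ℂ)) +
      b * Complex.exp (-(t:ℂ) * (u:ℂ)))‖ ≤ 2 * r * Real.exp (T * u - u ^ 3 / 6) := by
  have hr : 0 ≤ r := le_trans (norm_nonneg a) ha
  have h1 : ‖Complex.exp (γ₀ * (t:ℂ) * (u:ℂ))‖ ≤ Real.exp (T * u) := by
    rw [Complex.norm_exp, re_g, Real.exp_le_exp]
    nlinarith [le_abs_self t, abs_nonneg t]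
  have h2 : ‖Complex.exp (-(t:ℂ) * (u:ℂ))‖ ≤ Real.exp (T * u) := by
    rw [Complex.norm_exp, Real.exp_le_exp]
    have : (-(t:ℂ) * (u:ℂ)).re = -t * u := by
      have : (-(t:ℂ) * (u:ℂ)) = ((-t * u : ℝ) : ℂ) := by push_cast; ring
      rw [this, Complex.ofReal_re]
    rw [this]
    nlinarith [neg_abs_le t, abs_nonneg t]
  calc ‖Complex.exp (-(u:ℂ) ^ 3 / 6) * (a * Complex.exp (γ₀ * (t:ℂ) * (u:ℂ)) +
          b * Complex.exp (-(t:ℂ) * (u:ℂ)))‖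
      = Real.exp (-u ^ 3 / 6) *
          ‖a * Complex.exp (γ₀ * (t:ℂ) * (u:ℂ)) + b * Complex.exp (-(t:ℂ) * (u:ℂ))‖ := by
        rw [norm_mul, Complex.norm_exp, re_cube]
    _ ≤ Real.exp (-u ^ 3 / 6) * (r * Real.exp (T * u) + r * Real.exp (T * u)) := by
        apply mul_le_mul_of_nonneg_left _ (Real.exp_nonneg _)
        refine le_trans (norm_add_le _ _) (add_le_add ?_ ?_) <;>
          · rw [norm_mul]
            exact mul_le_mul (by assumption) (by assumption) (norm_nonneg _) hr
    _ = 2 * r * Real.exp (T * u - u ^ 3 / 6) := by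
        rw [show T * u - u ^ 3 / 6 = T * u + (-u ^ 3 / 6) by ring, Real.exp_add]; ring

lemma hd_e1 (t u : ℝ) :
    HasDerivAt (fun t : ℝ => Complex.exp (γ₀ * (t:ℂ) * (u:ℂ)))
      (γ₀ * (u:ℂ) * Complex.exp (γ₀ * (t:ℂ) * (u:ℂ))) t := by
  have h : HasDerivAt (fun z : ℂ => Complex.exp (γ₀ * z * (u:ℂ)))
      (γ₀ * (u:ℂ) * Complex.exp (γ₀ * (t:ℂ) * (u:ℂ))) (t:ℂ) := by
    have heq : (fun z : ℂ => Complex.exp (γ₀ * (u:ℂ) * z)) =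
        fun z : ℂ => Complex.exp (γ₀ * z * (u:ℂ)) := by
      funext z; congr 1; ring
    have := ((hasDerivAt_id ((t:ℂ))).const_mul (γ₀ * (u:ℂ))).cexp
    simp only [id_eq] at this; rw [heq] at this
    convert this using 1
    rfl
    ring_nf
  exact h.comp_ofReal

lemma hd_e2 (t u : ℝ) :
    HasDerivAt (fun t : ℝ => Complex.exp (-(t:ℂ) * (u:ℂ)))
      (-(u:ℂ) * Complex.exp (-(t:ℂ) * (u:ℂ))) t := by
  have h : HasDerivAt (fun z : ℂ => Complex.exp (-z * (u:ℂ)))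
      (-(u:ℂ) * Complex.exp (-(t:ℂ) * (u:ℂ))) (t:ℂ) := by
    have heq : (fun z : ℂ => Complex.exp (-(u:ℂ) * z)) =
        fun z : ℂ => Complex.exp (-z * (u:ℂ)) := by
      funext z; congr 1; ring
    have := ((hasDerivAt_id ((t:ℂ))).const_mul (-(u:ℂ))).cexp
    simp only [id_eq] at this; rw [heq] at this
    convert this using 1
    rfl
    ring_nf
  exact h.comp_ofReal

def F0 (t u : ℝ) : ℂ := Complex.exp (-(u:ℂ) ^ 3 / 6) *
  (γ₀ * Complex.exp (γ₀ * t * u) + Complex.exp (-(t:ℂ) * u))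

def F1 (t u : ℝ) : ℂ := Complex.exp (-(u:ℂ) ^ 3 / 6) *
  (γ₀ * (γ₀ * (u:ℂ) * Complex.exp (γ₀ * t * u)) + -(u:ℂ) * Complex.exp (-(t:ℂ) * u))

def F2 (t u : ℝ) : ℂ := Complex.exp (-(u:ℂ) ^ 3 / 6) *
  (γ₀ * (γ₀ * (u:ℂ) * (γ₀ * (u:ℂ) * Complex.exp (γ₀ * t * u))) +
    -(u:ℂ) * (-(u:ℂ) * Complex.exp (-(t:ℂ) * u)))

lemma hasDerivAt_F0 (u t : ℝ) : HasDerivAt (fun t => F0 t u) (F1 t u) t :=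
  (((hd_e1 t u).const_mul γ₀).add (hd_e2 t u)).const_mul (Complex.exp (-(u:ℂ) ^ 3 / 6))

lemma hasDerivAt_F1 (u t : ℝ) : HasDerivAt (fun t => F1 t u) (F2 t u) t :=
  ((((hd_e1 t u).const_mul (γ₀ * (u:ℂ))).const_mul γ₀).add
    ((hd_e2 t u).const_mul (-(u:ℂ)))).const_mul (Complex.exp (-(u:ℂ) ^ 3 / 6))

lemma normF0 (t u T : ℝ) (hu : 0 ≤ u) (ht : |t| ≤ T) :
    ‖F0 t u‖ ≤ 2 * 1 * Real.exp (T * u - u ^ 3 / 6) := by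
  have h : F0 t u = Complex.exp (-(u:ℂ) ^ 3 / 6) *
      (γ₀ * Complex.exp (γ₀ * (t:ℂ) * (u:ℂ)) + 1 * Complex.exp (-(t:ℂ) * (u:ℂ))) := by
    rw [F0]; ring
  rw [h]
  exact norm_bound t u T hu ht γ₀ 1 1 (le_of_eq γabs) (by simp)

lemma normF1 (t u T : ℝ) (hu : 0 ≤ u) (ht : |t| ≤ T) :
    ‖F1 t u‖ ≤ 2 * u * Real.exp (T * u - u ^ 3 / 6) := by
  have h : F1 t u = Complex.exp (-(u:ℂ) ^ 3 / 6) *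
      ((γ₀ ^ 2 * (u:ℂ)) * Complex.exp (γ₀ * (t:ℂ) * (u:ℂ)) +
        (-(u:ℂ)) * Complex.exp (-(t:ℂ) * (u:ℂ))) := by
    rw [F1]; ring
  rw [h]
  refine norm_bound t u T hu ht _ _ u ?_ ?_
  · rw [norm_mul, norm_pow, γabs, Complex.norm_real, Real.norm_eq_abs, _root_.abs_of_nonneg hu]; simp
  · rw [norm_neg, Complex.norm_real, Real.norm_eq_abs, _root_.abs_of_nonneg hu]

lemma normF2 (t u T : ℝ) (hu : 0 ≤ u) (ht : |t| ≤ T) :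
    ‖F2 t u‖ ≤ 2 * u ^ 2 * Real.exp (T * u - u ^ 3 / 6) := by
  have h : F2 t u = Complex.exp (-(u:ℂ) ^ 3 / 6) *
      ((γ₀ ^ 3 * (u:ℂ) ^ 2) * Complex.exp (γ₀ * (t:ℂ) * (u:ℂ)) +
        ((u:ℂ) ^ 2) * Complex.exp (-(t:ℂ) * (u:ℂ))) := by
    rw [F2]; ring
  rw [h]
  refine norm_bound t u T hu ht _ _ (u ^ 2) ?_ ?_
  · rw [norm_mul, norm_pow, norm_pow, γabs, Complex.norm_real, Real.norm_eq_abs, _root_.abs_of_nonneg hu]; simp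
  · rw [norm_pow, Complex.norm_real, Real.norm_eq_abs, _root_.abs_of_nonneg hu]

lemma contF0 (t : ℝ) : Continuous (F0 t) := by unfold F0; fun_prop
lemma contF1 (t : ℝ) : Continuous (F1 t) := by unfold F1; fun_prop
lemma contF2 (t : ℝ) : Continuous (F2 t) := by unfold F2; fun_prop

lemma intF0 (t : ℝ) : IntegrableOn (F0 t) (Set.Ioi 0) := by
  apply Integrable.mono' (g := fun u : ℝ => 2 * (u ^ 0 * Real.exp (|t| * u - u ^ 3 / 6)))
    ((integrable_poly_exp 0 |t|).const_mul 2) ((contF0 t).aestronglyMeasurable.restrict)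
  filter_upwards [ae_restrict_mem measurableSet_Ioi] with u hu
  simpa using normF0 t u |t| (le_of_lt hu) le_rfl

lemma intF1 (t : ℝ) : IntegrableOn (F1 t) (Set.Ioi 0) := by
  apply Integrable.mono' (g := fun u : ℝ => 2 * (u ^ 1 * Real.exp (|t| * u - u ^ 3 / 6)))
    ((integrable_poly_exp 1 |t|).const_mul 2) ((contF1 t).aestronglyMeasurable.restrict)
  filter_upwards [ae_restrict_mem measurableSet_Ioi] with u hu
  simpa [mul_assoc] using normF1 t u |t| (le_of_lt hu) le_rfl

lemma ball_abs {t₀ x : ℝ} (hx : x ∈ Metric.ball t₀ 1) : |x| ≤ |t₀| + 1 := by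
  have h : |x - t₀| < 1 := by simpa [Real.dist_eq] using hx
  calc |x| = |(x - t₀) + t₀| := by ring_nf
    _ ≤ |x - t₀| + |t₀| := abs_add_le _ _
    _ ≤ |t₀| + 1 := by linarith

lemma key1 (t₀ : ℝ) : Integrable (F1 t₀) (volume.restrict (Set.Ioi 0)) ∧
    HasDerivAt (fun t : ℝ => ∫ u in Set.Ioi (0:ℝ), F0 t u)
      (∫ u in Set.Ioi (0:ℝ), F1 t₀ u) t₀ := by
  refine hasDerivAt_integral_of_dominated_loc_of_deriv_le (F' := F1)
    (bound := fun u : ℝ => 2 * (u ^ 1 * Real.exp ((|t₀| + 1) * u - u ^ 3 / 6))) (Metric.ball_mem_nhds t₀ one_pos)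
    (Eventually.of_forall fun t => (contF0 t).aestronglyMeasurable.restrict)
    (intF0 t₀) ((contF1 t₀).aestronglyMeasurable.restrict) ?_
    ((integrable_poly_exp 1 (|t₀| + 1)).const_mul 2)
    (Eventually.of_forall fun u x _ => hasDerivAt_F0 u x)
  filter_upwards [ae_restrict_mem measurableSet_Ioi] with u hu x hx
  simpa [mul_assoc] using normF1 x u (|t₀| + 1) (le_of_lt hu) (ball_abs hx)

lemma key2 (t₀ : ℝ) : Integrable (F2 t₀) (volume.restrict (Set.Ioi 0)) ∧
    HasDerivAt (fun t : ℝ => ∫ u in Set.Ioi (0:ℝ), F1 t u)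
      (∫ u in Set.Ioi (0:ℝ), F2 t₀ u) t₀ := by
  refine hasDerivAt_integral_of_dominated_loc_of_deriv_le (F' := F2)
    (bound := fun u : ℝ => 2 * (u ^ 2 * Real.exp ((|t₀| + 1) * u - u ^ 3 / 6))) (Metric.ball_mem_nhds t₀ one_pos)
    (Eventually.of_forall fun t => (contF1 t).aestronglyMeasurable.restrict)
    (intF1 t₀) ((contF2 t₀).aestronglyMeasurable.restrict) ?_
    ((integrable_poly_exp 2 (|t₀| + 1)).const_mul 2)
    (Eventually.of_forall fun u x _ => hasDerivAt_F1 u x)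
  filter_upwards [ae_restrict_mem measurableSet_Ioi] with u hu x hx
  simpa [mul_assoc] using normF2 x u (|t₀| + 1) (le_of_lt hu) (ball_abs hx)

-- derivatives in u for the boundary-term function g
lemma hd_u_cube (u : ℝ) :
    HasDerivAt (fun u : ℝ => Complex.exp (-(u:ℂ) ^ 3 / 6))
      (-(u:ℂ) ^ 2 / 2 * Complex.exp (-(u:ℂ) ^ 3 / 6)) u := by
  have h : HasDerivAt (fun z : ℂ => Complex.exp (-z ^ 3 / 6))
      (-(u:ℂ) ^ 2 / 2 * Complex.exp (-(u:ℂ) ^ 3 / 6)) (u:ℂ) := by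
    have := (((hasDerivAt_pow 3 ((u:ℂ))).neg).div_const 6).cexp
    convert this using 1
    rfl
    norm_num
    simp only [Pi.neg_apply]
    ring
  exact h.comp_ofReal

lemma hd_u_e1 (t u : ℝ) :
    HasDerivAt (fun u : ℝ => Complex.exp (γ₀ * (t:ℂ) * (u:ℂ)))
      (γ₀ * (t:ℂ) * Complex.exp (γ₀ * (t:ℂ) * (u:ℂ))) u := by
  have h : HasDerivAt (fun z : ℂ => Complex.exp (γ₀ * (t:ℂ) * z))
      (γ₀ * (t:ℂ) * Complex.exp (γ₀ * (t:ℂ) * (u:ℂ))) (u:ℂ) := by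
    have := ((hasDerivAt_id ((u:ℂ))).const_mul (γ₀ * (t:ℂ))).cexp
    simp only [id_eq] at this
    convert this using 1
    rfl
    ring_nf
  exact h.comp_ofReal

lemma hd_u_e2 (t u : ℝ) :
    HasDerivAt (fun u : ℝ => Complex.exp (-(t:ℂ) * (u:ℂ)))
      (-(t:ℂ) * Complex.exp (-(t:ℂ) * (u:ℂ))) u := by
  have h : HasDerivAt (fun z : ℂ => Complex.exp (-(t:ℂ) * z))
      (-(t:ℂ) * Complex.exp (-(t:ℂ) * (u:ℂ))) (u:ℂ) := by
    have := ((hasDerivAt_id ((u:ℂ))).const_mul (-(t:ℂ))).cexp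
    simp only [id_eq] at this
    convert this using 1
    rfl
    ring_nf
  exact h.comp_ofReal

def g (t u : ℝ) : ℂ := 2 * Complex.exp (-(u:ℂ) ^ 3 / 6) *
  (Complex.exp (γ₀ * (t:ℂ) * (u:ℂ)) - Complex.exp (-(t:ℂ) * (u:ℂ)))

lemma hd_g (t u : ℝ) :
    HasDerivAt (g t) (F2 t u + (2 * (t:ℂ)) * F0 t u) u := by
  have h := ((hd_u_cube u).const_mul 2).mul ((hd_u_e1 t u).sub (hd_u_e2 t u))
  have heq : F2 t u + (2 * (t:ℂ)) * F0 t u =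
      2 * (-(u:ℂ) ^ 2 / 2 * Complex.exp (-(u:ℂ) ^ 3 / 6)) *
        (Complex.exp (γ₀ * (t:ℂ) * (u:ℂ)) - Complex.exp (-(t:ℂ) * (u:ℂ))) +
      2 * Complex.exp (-(u:ℂ) ^ 3 / 6) *
        (γ₀ * (t:ℂ) * Complex.exp (γ₀ * (t:ℂ) * (u:ℂ)) -
          -(t:ℂ) * Complex.exp (-(t:ℂ) * (u:ℂ))) := by
    rw [F0, F2]
    linear_combination ((u:ℂ) ^ 2 * Complex.exp (-(u:ℂ) ^ 3 / 6) *
      Complex.exp (γ₀ * (t:ℂ) * (u:ℂ))) * γcube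
  rw [heq]
  exact h

lemma tendsto_g (t : ℝ) : Tendsto (g t) atTop (nhds 0) := by
  apply squeeze_zero_norm' (a := fun u : ℝ => 2 * (2 * 1 * Real.exp (|t| * u - u ^ 3 / 6)))
  · filter_upwards [eventually_ge_atTop (0:ℝ)] with u hu
    have h : g t u = 2 * (Complex.exp (-(u:ℂ) ^ 3 / 6) *
        (1 * Complex.exp (γ₀ * (t:ℂ) * (u:ℂ)) + (-1) * Complex.exp (-(t:ℂ) * (u:ℂ)))) := by
      rw [g]; ring
    rw [h, norm_mul]
    have : ‖(2:ℂ)‖ = 2 := by norm_num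
    rw [this]
    exact mul_le_mul_of_nonneg_left
      (norm_bound t u |t| hu le_rfl 1 (-1) 1 (by simp) (by simp)) (by norm_num)
  · have h1 : Tendsto (fun u : ℝ => |t| * u - u ^ 3 / 6) atTop atBot := by
      apply tendsto_atBot_mono' atTop ?_ tendsto_neg_atTop_atBot
      filter_upwards [eventually_ge_atTop (max 1 (6 * (|t| + 1)))] with u hu
      have hu1 : (1:ℝ) ≤ u := le_trans (le_max_left _ _) hu
      have hu6 : 6 * (|t| + 1) ≤ u := le_trans (le_max_right _ _) hu
      nlinarith [mul_le_mul_of_nonneg_left hu6 (by linarith : (0:ℝ) ≤ u)]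
    have h2 := (Real.tendsto_exp_atBot.comp h1).const_mul (4:ℝ)
    rw [mul_zero] at h2
    have h3 : (fun u : ℝ => 2 * (2 * 1 * Real.exp (|t| * u - u ^ 3 / 6))) =
        (fun u : ℝ => 4 * Real.exp (|t| * u - u ^ 3 / 6)) := by funext u; ring
    rw [h3]
    simpa [Function.comp] using h2

lemma ode_key (t : ℝ) :
    ∫ u in Set.Ioi (0:ℝ), (F2 t u + (2 * (t:ℂ)) * F0 t u) = 0 := by
  have hcont : Continuous (g t) := by unfold g; fun_prop
  have h := integral_Ioi_of_hasDerivAt_of_tendsto (a := 0) (m := 0)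
    (hcont.continuousWithinAt) (fun u _ => hd_g t u)
    (((key2 t).1).add ((intF0 t).const_mul (2 * (t:ℂ)))) (tendsto_g t)
  rw [h]
  simp [g]

end AiryAux


theorem airy_type_equation :
    let γ : ℂ := Complex.exp (Real.pi * Complex.I / 3)
    let A : ℝ → ℂ := fun t =>
      ∫ u in Set.Ioi (0 : ℝ), Complex.exp (-(u : ℂ) ^ 3 / 6) *
        (γ * Complex.exp (γ * t * u) + Complex.exp (-(t : ℂ) * u))
    ∃ A' A'' : ℝ → ℂ,
      (∀ t : ℝ, HasDerivAt A (A' t) t) ∧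
      (∀ t : ℝ, HasDerivAt A' (A'' t) t) ∧
      ∀ t : ℝ, A'' t + 2 * t * A t = 0 := by
  intro γ A
  refine ⟨fun t => ∫ u in Set.Ioi (0:ℝ), F1 t u, fun t => ∫ u in Set.Ioi (0:ℝ), F2 t u,
    fun t => (key1 t).2, fun t => (key2 t).2, fun t => ?_⟩
  show (∫ u in Set.Ioi (0:ℝ), F2 t u) + 2 * (t:ℂ) * ∫ u in Set.Ioi (0:ℝ), F0 t u = 0
  rw [← integral_const_mul, ← integral_add ((key2 t).1) ((intF0 t).const_mul (2 * (t:ℂ)))]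
  exact ode_key t
end
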